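/- Let S be a subring of a commutative ring R and I an ideal of S. A polynomial f ∈ (T_n(R))[x] satisfies f(C) ∈ T_n(I) for all C ∈ T_n(S) (right substitution) if and only if for all 1 ≤ i ≤ j ≤ n, the scalar polynomial f_{ij} ∈ R[x] (formed from the (i,j)-entries of the coefficients of f) satisfies f_{ij}(C) ∈ T_{n−j+1}(I) for all C ∈ T_{n−j+1}(S). -/

import Mathlib

open Polynomial Matrix Finset

namespace Stmt13

variable {R : Type*} [CommRing R] {S : Subring R} {I : Ideal S}

def memI (S : Subring R) (I : Ideal S) (r : R) : Prop := ∃ s ∈ I, (s : R) = r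

lemma memI_zero : memI S I 0 := ⟨0, I.zero_mem, rfl⟩

lemma memI_sub {a b : R} (ha : memI S I a) (hb : memI S I b) : memI S I (a - b) := by
  obtain ⟨s, hs, rfl⟩ := ha; obtain ⟨t, ht, rfl⟩ := hb
  exact ⟨s - t, I.sub_mem hs ht, by push_cast; ring⟩

lemma memI_sum {ι : Type*} {t : Finset ι} {g : ι → R} (h : ∀ x ∈ t, memI S I (g x)) :
    memI S I (∑ x ∈ t, g x) := by
  classical
  induction t using Finset.induction with
  | empty => simpa using (memI_zero : memI S I 0)
  | insert _ _ hx ih =>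
    rw [Finset.sum_insert hx]
    obtain ⟨s, hs, hse⟩ := h _ (Finset.mem_insert_self _ _)
    obtain ⟨u, hu, hue⟩ := ih fun x hxt => h x (Finset.mem_insert_of_mem hxt)
    exact ⟨s + u, I.add_mem hs hu, by push_cast [hse, hue]; ring⟩

/-- Trailing-block embedding `Fin m' → Fin m`, `p ↦ l + p`. -/
def tE {m m' : ℕ} (l : ℕ) (h : l + m' = m) : Fin m' ↪ Fin m :=
  ⟨fun p => ⟨l + p, by omega⟩, fun p q hpq => by
    simpa [Fin.ext_iff] using hpq⟩

@[simp] lemma tE_apply {m m' l : ℕ} (h : l + m' = m) (p : Fin m') :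
    (tE l h p : ℕ) = l + p := rfl

/-- Powers of a block-triangular matrix agree with powers of its trailing corner. -/
lemma pow_tE {m m' l : ℕ} (h : l + m' = m) (C : Matrix (Fin m) (Fin m) R)
    (hC : C.BlockTriangular id) (k : ℕ) (p q : Fin m') :
    ((C.submatrix (tE l h) (tE l h)) ^ k) p q = (C ^ k) (tE l h p) (tE l h q) := by
  induction k generalizing p q with
  | zero =>
    have : (p = q) ↔ (tE l h p = tE l h q) := by
      constructor
      · rintro rfl; rfl
      · intro hh; exact (tE l h).injective hh
    simp only [pow_zero, Matrix.one_apply]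
    by_cases hpq : p = q
    · rw [if_pos hpq, if_pos (this.1 hpq)]
    · rw [if_neg hpq, if_neg (fun c => hpq (this.2 c))]
  | succ k ih =>
    rw [pow_succ', pow_succ', Matrix.mul_apply, Matrix.mul_apply]
    have hz : ∀ v ∈ (Finset.univ : Finset (Fin m)),
        v ∉ Finset.univ.map (tE l h) →
        C (tE l h p) v * (C ^ k) v (tE l h q) = 0 := by
      intro v _ hv
      have hvl : (v : ℕ) < l := by
        by_contra hvl
        push_neg at hvl
        refine hv (Finset.mem_map.2 ⟨⟨(v : ℕ) - l, by omega⟩, Finset.mem_univ _, ?_⟩)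
        simp only [Fin.ext_iff, tE_apply, Fin.val_mk]; omega
      have hzero : C (tE l h p) v = 0 := hC (show (id v : Fin m) < id (tE l h p) by
        simp only [id]; rw [Fin.lt_def]; simp; omega)
      rw [hzero, zero_mul]
    rw [← Finset.sum_subset (Finset.subset_univ _) hz, Finset.sum_map]
    refine Finset.sum_congr rfl fun u _ => ?_
    rw [Matrix.submatrix_apply, ih]

/-- Powers of a zero-padded matrix agree with powers of its leading corner. -/
lemma pow_lE {m m' : ℕ} (hm : m' ≤ m) (A : Matrix (Fin m') (Fin m') R) (k : ℕ)
    (p q : Fin m') :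
    ((Matrix.of fun u v : Fin m =>
        if h : (u : ℕ) < m' ∧ (v : ℕ) < m' then A ⟨u, h.1⟩ ⟨v, h.2⟩ else 0) ^ k)
      (Fin.castLE hm p) (Fin.castLE hm q) = (A ^ k) p q := by
  induction k generalizing p q with
  | zero =>
    simp only [pow_zero, Matrix.one_apply, Fin.castLE_inj]
  | succ k ih =>
    rw [pow_succ, pow_succ, Matrix.mul_apply, Matrix.mul_apply]
    set E := (Matrix.of fun u v : Fin m =>
        if h : (u : ℕ) < m' ∧ (v : ℕ) < m' then A ⟨u, h.1⟩ ⟨v, h.2⟩ else 0) with hE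
    have hz : ∀ v ∈ (Finset.univ : Finset (Fin m)),
        v ∉ Finset.univ.map (Fin.castLEEmb hm) →
        (E ^ k) (Fin.castLE hm p) v * E v (Fin.castLE hm q) = 0 := by
      intro v _ hv
      have hvl : ¬ (v : ℕ) < m' := by
        intro hvl
        exact hv (Finset.mem_map.2 ⟨⟨(v : ℕ), hvl⟩, Finset.mem_univ _, rfl⟩)
      have hzero : E v (Fin.castLE hm q) = 0 := by
        rw [hE]; simp only [Matrix.of_apply]
        rw [dif_neg (fun c => hvl c.1)]
      rw [hzero, mul_zero]
    rw [← Finset.sum_subset (Finset.subset_univ _) hz, Finset.sum_map]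
    refine Finset.sum_congr rfl fun u _ => ?_
    have h1 : (E ^ k) (Fin.castLE hm p) (Fin.castLEEmb hm u) = (A ^ k) p u := ih p u
    have h2 : E (Fin.castLEEmb hm u) (Fin.castLE hm q) = A u q := by
      rw [hE]; simp only [Matrix.of_apply]
      rw [dif_pos ⟨u.isLt, q.isLt⟩]
      rfl
    rw [h1, h2]

/-- Powers of a block-triangular matrix are block-triangular (w.r.t. `id` on `Fin m`). -/
lemma pow_bt {m : ℕ} (C : Matrix (Fin m) (Fin m) R) (hC : C.BlockTriangular id) (k : ℕ) :
    (C ^ k).BlockTriangular id := by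
  induction k with
  | zero => rw [pow_zero]; exact Matrix.blockTriangular_one
  | succ k ih => rw [pow_succ]; exact ih.mul hC

end Stmt13
namespace Stmt13

variable {R : Type*} [CommRing R] {S : Subring R} {I : Ideal S}

/-- Entrywise formula for `aeval` of a scalar polynomial given as `∑ C cₖ * Xᵏ`. -/
lemma aeval_g_entry {m : ℕ} (t : Finset ℕ) (c : ℕ → R) (C : Matrix (Fin m) (Fin m) R)
    (a b : Fin m) :
    (Polynomial.aeval C (∑ k ∈ t, Polynomial.C (c k) * Polynomial.X ^ k)) a b
      = ∑ k ∈ t, c k * (C ^ k) a b := by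
  rw [map_sum, Matrix.sum_apply]
  refine Finset.sum_congr rfl fun k _ => ?_
  rw [_root_.map_mul, Polynomial.aeval_C, map_pow, Polynomial.aeval_X,
    Algebra.algebraMap_eq_smul_one, smul_mul_assoc, one_mul, Matrix.smul_apply, smul_eq_mul]

/-- Entrywise formula for right evaluation of a matrix polynomial. -/
lemma eval_entry {m : ℕ} (p : Polynomial (Matrix (Fin m) (Fin m) R))
    (C : Matrix (Fin m) (Fin m) R) (a b : Fin m) :
    p.eval C a b = ∑ k ∈ p.support, ∑ l, p.coeff k a l * (C ^ k) l b := by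
  rw [Polynomial.eval_eq_sum, Polynomial.sum_def, Matrix.sum_apply]
  exact Finset.sum_congr rfl fun k _ => Matrix.mul_apply

end Stmt13
namespace Stmt13

variable {R : Type*} [CommRing R]

lemma key {n : ℕ} {S : Subring R} {I : Ideal S}
    (f : Polynomial (Matrix (Fin n) (Fin n) R))
    (hf : ∀ k, (f.coeff k).BlockTriangular id)
    (H : ∀ C : Matrix (Fin n) (Fin n) R, C.BlockTriangular id → (∀ a b, C a b ∈ S) →
        ∀ a b : Fin n, memI S I (f.eval C a b)) :
    ∀ d : ℕ, ∀ i j : Fin n, n - (j : ℕ) ≤ d → i ≤ j →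
      ∀ C : Matrix (Fin (n - (j : ℕ))) (Fin (n - (j : ℕ))) R, C.BlockTriangular id →
        (∀ a b, C a b ∈ S) → ∀ a b, memI S I
          ((Polynomial.aeval C (∑ k ∈ f.support,
              Polynomial.C (f.coeff k i j) * Polynomial.X ^ k)) a b) := by
  intro d
  induction d with
  | zero => intro i j hd _; exact absurd hd (by have := j.isLt; omega)
  | succ d ih =>
    intro i j hd hij
    have hjn := j.isLt
    have hm1 : 0 < n - (j : ℕ) := by omega
    have hjm : (j : ℕ) + (n - (j : ℕ)) = n := by omega
    -- Row-zero case.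
    have row0 : ∀ C : Matrix (Fin (n - (j : ℕ))) (Fin (n - (j : ℕ))) R, C.BlockTriangular id →
        (∀ a b, C a b ∈ S) → ∀ b, memI S I
          ((Polynomial.aeval C (∑ k ∈ f.support,
              Polynomial.C (f.coeff k i j) * Polynomial.X ^ k)) ⟨0, hm1⟩ b) := by
      intro C hC hCS b
      set D : Matrix (Fin n) (Fin n) R := Matrix.of fun u v =>
        if h : (j : ℕ) ≤ (u : ℕ) ∧ (j : ℕ) ≤ (v : ℕ) then
          C ⟨(u : ℕ) - j, by omega⟩ ⟨(v : ℕ) - j, by omega⟩ else 0 with hD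
      have hDt : D.BlockTriangular id := by
        intro u v huv
        simp only [hD, Matrix.of_apply]
        split_ifs with h'
        · refine hC ?_
          show ((v : ℕ) - j) < ((u : ℕ) - j)
          have : (v : ℕ) < (u : ℕ) := huv
          omega
        · rfl
      have hDS : ∀ u v, D u v ∈ S := by
        intro u v
        simp only [hD, Matrix.of_apply]
        split_ifs with h'
        · exact hCS _ _
        · exact S.zero_mem
      have hjb : (j : ℕ) + (b : ℕ) < n := by have := b.isLt; omega
      obtain ⟨s, hs, hse⟩ := H D hDt hDS i ⟨(j : ℕ) + b, hjb⟩
      set F : Fin n → R := fun l =>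
        ∑ k ∈ f.support, f.coeff k i l * (D ^ k) l ⟨(j : ℕ) + b, hjb⟩ with hF
      have heval : f.eval D i ⟨(j : ℕ) + b, hjb⟩ = ∑ l, F l := by
        rw [eval_entry]; exact Finset.sum_comm
      have hsub : D.submatrix (tE (j : ℕ) hjm) (tE (j : ℕ) hjm) = C := by
        ext p q
        simp only [Matrix.submatrix_apply, hD, Matrix.of_apply, tE,
          Function.Embedding.coeFn_mk]
        rw [dif_pos ⟨Nat.le_add_right _ _, Nat.le_add_right _ _⟩]
        congr 1 <;> exact Fin.ext (by show (j : ℕ) + _ - j = _; omega)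
      -- entries of `D ^ k` inside the corner
      have hDk : ∀ k (p q : Fin (n - (j : ℕ))),
          (D ^ k) (tE (j : ℕ) hjm p) (tE (j : ℕ) hjm q) = (C ^ k) p q := by
        intro k p q
        rw [← pow_tE hjm D hDt k p q, hsub]
      have htEb : tE (j : ℕ) hjm b = ⟨(j : ℕ) + b, hjb⟩ := rfl
      -- the diagonal term is the target
      have hFj : F j = (Polynomial.aeval C (∑ k ∈ f.support,
          Polynomial.C (f.coeff k i j) * Polynomial.X ^ k)) ⟨0, hm1⟩ b := by
        rw [aeval_g_entry]
        refine Finset.sum_congr rfl fun k _ => ?_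
        congr 1
        have h0 : tE (j : ℕ) hjm ⟨0, hm1⟩ = j := Fin.ext (by simp)
        rw [← hDk k ⟨0, hm1⟩ b, h0, htEb]
      -- all other terms lie in (the image of) I
      have hmem : ∀ l : Fin n, l ≠ j → memI S I (F l) := by
        intro l hne
        rcases lt_trichotomy (l : ℕ) (j : ℕ) with hlj | hlj | hlj
        · -- rows above `j` of `D` vanish
          have hrow : ∀ v, D l v = 0 := by
            intro v
            simp only [hD, Matrix.of_apply]
            rw [dif_neg]; omega
          have hterm : ∀ k, (D ^ k) l ⟨(j : ℕ) + b, hjb⟩ = 0 := by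
            intro k
            cases k with
            | zero =>
              rw [pow_zero]
              exact Matrix.one_apply_ne (by
                intro c
                have := congrArg Fin.val c
                simp at this; omega)
            | succ k =>
              rw [pow_succ', Matrix.mul_apply]
              exact Finset.sum_eq_zero fun v _ => by rw [hrow v, zero_mul]
          have : F l = 0 := Finset.sum_eq_zero fun k _ => by rw [hterm k, mul_zero]
          rw [this]; exact memI_zero
        · exact absurd (Fin.ext hlj) hne
        · -- strictly lower rows: use the inductive hypothesis
          have hal : (l : ℕ) - j < n - (j : ℕ) := by have := l.isLt; omega
          have htEl : tE (j : ℕ) hjm ⟨(l : ℕ) - j, hal⟩ = l := Fin.ext (by simp; omega)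
          have hDkC : ∀ k, (D ^ k) l ⟨(j : ℕ) + b, hjb⟩ = (C ^ k) ⟨(l : ℕ) - j, hal⟩ b := by
            intro k
            rw [← hDk k ⟨(l : ℕ) - j, hal⟩ b, htEl, htEb]
          by_cases hba : (b : ℕ) < (l : ℕ) - j
          · have : F l = 0 := Finset.sum_eq_zero fun k _ => by
              have hz : (C ^ k) ⟨(l : ℕ) - j, hal⟩ b = 0 :=
                pow_bt C hC k (show id b < id (⟨(l : ℕ) - j, hal⟩ : Fin (n - (j : ℕ))) from hba)
              rw [hDkC k, hz, mul_zero]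
            rw [this]; exact memI_zero
          · push_neg at hba
            have hln := l.isLt
            have h2 : ((l : ℕ) - j) + (n - (l : ℕ)) = n - (j : ℕ) := by omega
            set C2 := C.submatrix (tE ((l : ℕ) - j) h2) (tE ((l : ℕ) - j) h2) with hC2
            have hC2t : C2.BlockTriangular id := by
              intro p q hpq
              refine hC ?_
              show ((l : ℕ) - j + (q : ℕ)) < ((l : ℕ) - j + (p : ℕ))
              have : (q : ℕ) < (p : ℕ) := hpq
              omega
            have hC2S : ∀ p q, C2 p q ∈ S := fun p q => hCS _ _
            have hb0 : (b : ℕ) - ((l : ℕ) - j) < n - (l : ℕ) := by have := b.isLt; omega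
            have hl0 : 0 < n - (l : ℕ) := by omega
            have hFl : F l = (Polynomial.aeval C2 (∑ k ∈ f.support,
                Polynomial.C (f.coeff k i l) * Polynomial.X ^ k)) ⟨0, hl0⟩
                  ⟨(b : ℕ) - ((l : ℕ) - j), hb0⟩ := by
              rw [aeval_g_entry]
              refine Finset.sum_congr rfl fun k _ => ?_
              congr 1
              have e1 : tE ((l : ℕ) - j) h2 ⟨0, hl0⟩ = ⟨(l : ℕ) - j, hal⟩ :=
                Fin.ext (by simp)
              have e2 : tE ((l : ℕ) - j) h2 ⟨(b : ℕ) - ((l : ℕ) - j), hb0⟩ = b :=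
                Fin.ext (by simp; omega)
              have hpt := pow_tE h2 C hC k ⟨0, hl0⟩ ⟨(b : ℕ) - ((l : ℕ) - j), hb0⟩
              rw [← hC2, e1, e2] at hpt
              rw [hDkC k, ← hpt]
            rw [hFl]
            exact ih i l (by omega) (le_of_lt (lt_of_le_of_lt hij (show j < l from hlj)))
              C2 hC2t hC2S _ _
      -- put everything together
      have hsplit : F j + ∑ l ∈ Finset.univ.erase j, F l = ∑ l, F l :=
        Finset.add_sum_erase _ _ (Finset.mem_univ j)
      have hsum : ∑ l, F l = (s : R) := by rw [hse, heval]
      have hFj' : F j = (s : R) - ∑ l ∈ Finset.univ.erase j, F l :=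
        eq_sub_of_add_eq (hsplit.trans hsum)
      rw [← hFj, hFj']
      exact memI_sub ⟨s, hs, rfl⟩
        (memI_sum fun l hl => hmem l (Finset.ne_of_mem_erase hl))
    -- general entries, by padding
    intro C hC hCS a b
    rcases lt_or_ge (b : ℕ) (a : ℕ) with hba | hab
    · have : (Polynomial.aeval C (∑ k ∈ f.support,
          Polynomial.C (f.coeff k i j) * Polynomial.X ^ k)) a b = 0 := by
        rw [aeval_g_entry]
        exact Finset.sum_eq_zero fun k _ => by
          have hz : (C ^ k) a b = 0 := pow_bt C hC k (show id b < id a from hba)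
          rw [hz, mul_zero]
      rw [this]; exact memI_zero
    · have ham := a.isLt
      have h3 : (a : ℕ) + (n - (j : ℕ) - (a : ℕ)) = n - (j : ℕ) := by omega
      have hm'' : n - (j : ℕ) - (a : ℕ) ≤ n - (j : ℕ) := by omega
      set A := C.submatrix (tE (a : ℕ) h3) (tE (a : ℕ) h3) with hA
      set E : Matrix (Fin (n - (j : ℕ))) (Fin (n - (j : ℕ))) R := Matrix.of fun u v =>
        if h : (u : ℕ) < n - (j : ℕ) - (a : ℕ) ∧ (v : ℕ) < n - (j : ℕ) - (a : ℕ) then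
          A ⟨u, h.1⟩ ⟨v, h.2⟩ else 0 with hE
      have hEt : E.BlockTriangular id := by
        intro u v huv
        simp only [hE, Matrix.of_apply]
        split_ifs with h'
        · refine hC ?_
          show ((a : ℕ) + (v : ℕ)) < ((a : ℕ) + (u : ℕ))
          have : (v : ℕ) < (u : ℕ) := huv
          omega
        · rfl
      have hES : ∀ u v, E u v ∈ S := by
        intro u v
        simp only [hE, Matrix.of_apply]
        split_ifs with h'
        · exact hCS _ _
        · exact S.zero_mem
      have h0m : 0 < n - (j : ℕ) - (a : ℕ) := by omega
      have hbm : (b : ℕ) - (a : ℕ) < n - (j : ℕ) - (a : ℕ) := by have := b.isLt; omega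
      have hkey : ∀ k, (C ^ k) a b = (E ^ k) ⟨0, hm1⟩ ⟨(b : ℕ) - a, by omega⟩ := by
        intro k
        have h5 := pow_lE (R := R) hm'' A k ⟨0, h0m⟩ ⟨(b : ℕ) - a, hbm⟩
        have h4 := pow_tE h3 C hC k ⟨0, h0m⟩ ⟨(b : ℕ) - a, hbm⟩
        rw [← hA] at h4
        have e1 : tE (a : ℕ) h3 ⟨0, h0m⟩ = a := Fin.ext (by simp)
        have e2 : tE (a : ℕ) h3 ⟨(b : ℕ) - a, hbm⟩ = b := Fin.ext (by simp; omega)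
        rw [e1, e2] at h4
        have c1 : Fin.castLE hm'' ⟨0, h0m⟩ = (⟨0, hm1⟩ : Fin (n - (j : ℕ))) := rfl
        have c2 : Fin.castLE hm'' ⟨(b : ℕ) - a, hbm⟩
            = (⟨(b : ℕ) - a, by omega⟩ : Fin (n - (j : ℕ))) := rfl
        rw [c1, c2, ← hE] at h5
        rw [← h4, ← h5]
      have hEq : (Polynomial.aeval C (∑ k ∈ f.support,
          Polynomial.C (f.coeff k i j) * Polynomial.X ^ k)) a b
          = (Polynomial.aeval E (∑ k ∈ f.support,
          Polynomial.C (f.coeff k i j) * Polynomial.X ^ k)) ⟨0, hm1⟩ ⟨(b : ℕ) - a, by omega⟩ := by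
        rw [aeval_g_entry, aeval_g_entry]
        exact Finset.sum_congr rfl fun k _ => by rw [hkey k]
      rw [hEq]
      exact row0 E hEt hES _

end Stmt13

/-- `f ∈ (Tₙ(R))[x]` maps `Tₙ(S)` into `Tₙ(I)` under right substitution iff for all
`1 ≤ i ≤ j ≤ n` the scalar polynomial `f_{ij}` maps `T_{n-j+1}(S)` into `T_{n-j+1}(I)`.
(With 0-indexed `j : Fin n` the size `n-j+1` becomes `n - j`.) -/
theorem stmt13 (n : ℕ) (R : Type*) [CommRing R] (S : Subring R) (I : Ideal S)
    (f : Polynomial (Matrix (Fin n) (Fin n) R))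
    (hf : ∀ k, (f.coeff k).BlockTriangular id) :
    (∀ C : Matrix (Fin n) (Fin n) R, C.BlockTriangular id → (∀ a b, C a b ∈ S) →
        (f.eval C).BlockTriangular id ∧
          ∀ a b : Fin n, ∃ s ∈ I, (s : R) = f.eval C a b)
    ↔ ∀ i j : Fin n, i ≤ j →
        ∀ C : Matrix (Fin (n - (j : ℕ))) (Fin (n - (j : ℕ))) R, C.BlockTriangular id →
          (∀ a b, C a b ∈ S) →
          (Polynomial.aeval C
              (∑ k ∈ f.support, Polynomial.C (f.coeff k i j) * Polynomial.X ^ k)).BlockTriangular id ∧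
            ∀ a b, ∃ s ∈ I, (s : R) =
              (Polynomial.aeval C
                (∑ k ∈ f.support, Polynomial.C (f.coeff k i j) * Polynomial.X ^ k)) a b := by
  constructor
  · intro h i j hij C hC hCS
    constructor
    · intro a b hba
      rw [Stmt13.aeval_g_entry]
      exact Finset.sum_eq_zero fun k _ => by
        have hz : (C ^ k) a b = 0 := Stmt13.pow_bt C hC k hba
        rw [hz, mul_zero]
    · intro a b
      exact Stmt13.key f hf (fun C hC hCS a b => (h C hC hCS).2 a b) n i j
        (by omega) hij C hC hCS a b
  · intro h C hC hCS
    constructor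
    · intro a b hba
      rw [Stmt13.eval_entry]
      refine Finset.sum_eq_zero fun k _ => Finset.sum_eq_zero fun l _ => ?_
      rcases le_or_gt (l : ℕ) (b : ℕ) with hlb | hbl
      · have hz : f.coeff k a l = 0 := hf k (show id l < id a from
          lt_of_le_of_lt (show (l : ℕ) ≤ (b : ℕ) from hlb) hba)
        rw [hz, zero_mul]
      · have hz : (C ^ k) l b = 0 := Stmt13.pow_bt C hC k (show id b < id l from hbl)
        rw [hz, mul_zero]
    · intro a b
      rw [Stmt13.eval_entry, Finset.sum_comm]
      refine Stmt13.memI_sum fun l _ => ?_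
      rcases lt_or_ge (l : ℕ) (a : ℕ) with hla | hal
      · have : ∑ k ∈ f.support, f.coeff k a l * (C ^ k) l b = 0 :=
          Finset.sum_eq_zero fun k _ => by
            have hz : f.coeff k a l = 0 := hf k (show id l < id a from hla)
            rw [hz, zero_mul]
        rw [this]; exact Stmt13.memI_zero
      rcases lt_or_ge (b : ℕ) (l : ℕ) with hbl | hlb
      · have : ∑ k ∈ f.support, f.coeff k a l * (C ^ k) l b = 0 :=
          Finset.sum_eq_zero fun k _ => by
            have hz : (C ^ k) l b = 0 := Stmt13.pow_bt C hC k (show id b < id l from hbl)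
            rw [hz, mul_zero]
        rw [this]; exact Stmt13.memI_zero
      · have hln := l.isLt
        have hn : (l : ℕ) + (n - (l : ℕ)) = n := by omega
        set C2 := C.submatrix (Stmt13.tE (l : ℕ) hn) (Stmt13.tE (l : ℕ) hn) with hC2
        have hC2t : C2.BlockTriangular id := by
          intro p q hpq
          refine hC ?_
          show ((l : ℕ) + (q : ℕ)) < ((l : ℕ) + (p : ℕ))
          have : (q : ℕ) < (p : ℕ) := hpq
          omega
        have hC2S : ∀ p q, C2 p q ∈ S := fun p q => hCS _ _
        have hl0 : 0 < n - (l : ℕ) := by omega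
        have hb0 : (b : ℕ) - (l : ℕ) < n - (l : ℕ) := by have := b.isLt; omega
        obtain ⟨s, hs, hse⟩ := (h a l hal C2 hC2t hC2S).2 ⟨0, hl0⟩ ⟨(b : ℕ) - l, hb0⟩
        refine ⟨s, hs, ?_⟩
        rw [hse, Stmt13.aeval_g_entry]
        refine Finset.sum_congr rfl fun k _ => ?_
        congr 1
        have e1 : Stmt13.tE (l : ℕ) hn ⟨0, hl0⟩ = l := Fin.ext (by simp)
        have e2 : Stmt13.tE (l : ℕ) hn ⟨(b : ℕ) - l, hb0⟩ = b := Fin.ext (by simp; omega)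
        have hpt := Stmt13.pow_tE hn C hC k ⟨0, hl0⟩ ⟨(b : ℕ) - l, hb0⟩
        rw [← hC2, e1, e2] at hpt
        rw [hpt]
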